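/- Let g₁, g₂, … : ℂ → ℂ be a sequence of functions and f : ℂ → ℂ. For each n ≥ 2 let Lₙ be an n×n real symmetric positive semidefinite matrix with Lₙ𝟙 = 0, and let λₙ ≥ 0 satisfy x*Lₙx ≥ λₙ‖x‖² for every complex vector x ∈ ℂⁿ orthogonal to 𝟙, with λₙ → ∞ as n → ∞. Let S ⊂ ℂ be compact and suppose: (i) there is M₂ > 0 with |gᵢ(s)⁻¹| ≤ M₂ for all i and all s ∈ S (uniform boundedness of the gᵢ⁻¹ on S); (ii) there is M₁ > 0 such that for all n and all s ∈ S, ∑_{i=1}^n gᵢ(s)⁻¹ ≠ 0 and |ḡₙ(s)| ≤ M₁, where ḡₙ(s) := ((1/n)∑_{i=1}^n gᵢ(s)⁻¹)⁻¹ (uniform boundedness of the ḡₙ on S); (iii) inf_{s∈S}|f(s)| > 0. Then for every ε > 0 there exists N such that for all n ≥ N and all s ∈ S, the matrix Tₙ(s) := (diag(g₁(s)⁻¹,…,gₙ(s)⁻¹) + f(s)·Lₙ)⁻¹ is well defined (the matrix being inverted is invertible) and ‖Tₙ(s) − (1/n)ḡₙ(s)·𝟙𝟙ᵀ‖ ≤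 ε. -/

import Mathlib

open Matrix Complex Filter Topology

/-- Spectral norm (L2 operator norm) of a complex matrix. -/
noncomputable def specNorm {n : ℕ} (A : Matrix (Fin n) (Fin n) ℂ) : ℝ :=
  ‖Matrix.toEuclideanCLM (𝕜 := ℂ) A‖

/-- The all-ones matrix. -/
def allOnes (n : ℕ) : Matrix (Fin n) (Fin n) ℂ := Matrix.of fun _ _ => 1

noncomputable def en {n : ℕ} (v : Fin n → ℂ) : ℝ := ‖(WithLp.equiv 2 (Fin n → ℂ)).symm v‖

variable {n : ℕ}

lemma en_nonneg (v : Fin n → ℂ) : 0 ≤ en v := norm_nonneg _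

lemma en_sq (v : Fin n → ℂ) : en v ^ 2 = ∑ i, ‖v i‖ ^ 2 := by
  rw [en, EuclideanSpace.norm_eq, Real.sq_sqrt (by positivity)]
  rfl

lemma en_dot (u v : Fin n → ℂ) : ‖star u ⬝ᵥ v‖ ≤ en u * en v := by
  have := norm_inner_le_norm (𝕜 := ℂ) ((WithLp.equiv 2 (Fin n → ℂ)).symm u) ((WithLp.equiv 2 (Fin n → ℂ)).symm v)
  rw [PiLp.inner_apply] at this
  convert this using 2
  · rfl
  · simp [dotProduct, mul_comm]
  · rfl
  · rfl

lemma en_add (u v : Fin n → ℂ) : en (u + v) ≤ en u + en v := by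
  simpa [en] using norm_add_le ((WithLp.equiv 2 (Fin n → ℂ)).symm u) ((WithLp.equiv 2 (Fin n → ℂ)).symm v)

lemma en_smul (c : ℂ) (v : Fin n → ℂ) : en (c • v) = ‖c‖ * en v := by
  simpa [en] using norm_smul c ((WithLp.equiv 2 (Fin n → ℂ)).symm v)

lemma en_zero_iff (v : Fin n → ℂ) : en v = 0 ↔ v = 0 := by
  rw [en, norm_eq_zero]
  constructor
  · intro h; have := congrArg (WithLp.equiv 2 (Fin n → ℂ)) h; simpa using this
  · intro h; simp [h]

lemma en_ones : en (fun _ : Fin n => (1:ℂ)) = Real.sqrt n := by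
  have := en_sq (fun _ : Fin n => (1:ℂ))
  simp at this
  rw [← Real.sqrt_sq (en_nonneg _), this]

lemma en_le_of_sq_le {v : Fin n → ℂ} {b : ℝ} (hb : 0 ≤ b) (h : en v ^ 2 ≤ b ^ 2) : en v ≤ b := by
  nlinarith [en_nonneg v]

set_option maxHeartbeats 2000000 in
/-- The key quantitative estimate. -/
lemma key (Lr : Matrix (Fin n) (Fin n) ℝ) (hsym : Lrᵀ = Lr)
    (h1 : Lr.mulVec (fun _ => 1) = 0)
    (lamv : ℝ)
    (hgap : ∀ x : Fin n → ℂ, (∑ i, x i = 0) →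
      lamv * ∑ i, ‖x i‖ ^ 2 ≤ (star x ⬝ᵥ (Lr.map Complex.ofReal).mulVec x).re)
    (d : Fin n → ℂ) (fv : ℂ) (M₁ M₂ c : ℝ)
    (hM₂0 : 0 < M₂) (hd : ∀ i, ‖d i‖ ≤ M₂)
    (hσ : (∑ i, d i) ≠ 0)
    (hM₁ : ‖((n:ℂ)⁻¹ * ∑ i, d i)⁻¹‖ ≤ M₁)
    (hc : 0 < c) (hcf : c ≤ ‖fv‖)
    (hn : 1 ≤ n)
    (hlam : 2 * M₂ * (M₁ * M₂ + 1) / c ≤ lamv)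
    (x z : Fin n → ℂ)
    (hxz : (Matrix.diagonal d + fv • (Lr.map Complex.ofReal)).mulVec x = z) :
    en (x - ((n:ℂ)⁻¹ * ((n:ℂ)⁻¹ * ∑ i, d i)⁻¹ * ∑ i, z i) • (fun _ : Fin n => (1:ℂ))) ≤
      (2 * (1 + M₁ * M₂) ^ 2 / (c * lamv)) * en z := by
  have hM₁0 : 0 ≤ M₁ := le_trans (norm_nonneg _) hM₁
  have hlam0 : 0 < lamv := lt_of_lt_of_le (by positivity) hlam
  have hn0 : (n:ℂ) ≠ 0 := Nat.cast_ne_zero.mpr (by omega)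
  set Lc : Matrix (Fin n) (Fin n) ℂ := Lr.map Complex.ofReal with hLc
  set σ : ℂ := ∑ i, d i with hσdef
  set α : ℂ := ((n:ℂ)⁻¹ * σ)⁻¹ with hα
  set m : ℂ := (∑ i, x i) / n with hm
  set y : Fin n → ℂ := x - m • (fun _ : Fin n => (1:ℂ)) with hy
  have hy0 : ∑ i, y i = 0 := by
    simp [hy, Finset.sum_sub_distrib, hm]
    field_simp
    ring
  have hxmy : x = m • (fun _ : Fin n => (1:ℂ)) + y := by simp [hy]
  -- Lc kills ones
  have hLc1 : Lc.mulVec (fun _ => 1) = 0 := by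
    funext i
    have := congrFun h1 i
    simp [Matrix.mulVec, dotProduct] at this ⊢
    simp [hLc, Matrix.map_apply]
    exact_mod_cast this
  -- column sums of Lc vanish
  have hLcol : ∀ j, ∑ i, Lc i j = 0 := by
    intro j
    have := congrFun hLc1 j
    simp [Matrix.mulVec, dotProduct] at this
    calc ∑ i, Lc i j = ∑ i, Lc j i := by
          refine Finset.sum_congr rfl fun i _ => ?_
          have h2 : Lr i j = Lr j i := by conv_lhs => rw [← hsym, Matrix.transpose_apply]
          simp [hLc, Matrix.map_apply, h2]
      _ = 0 := by simpa using this
  -- sum of entries of Lc.mulVec v vanishes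
  have hLsum : ∀ v : Fin n → ℂ, ∑ i, (Lc.mulVec v) i = 0 := by
    intro v
    simp only [Matrix.mulVec, dotProduct]
    rw [Finset.sum_comm]
    simp only [← Finset.sum_mul]
    simp [hLcol]
  have hLx : Lc.mulVec x = Lc.mulVec y := by
    rw [hxmy, Matrix.mulVec_add, Matrix.mulVec_smul, hLc1]
    simp
  have hAx : ∀ v, (Matrix.diagonal d + fv • Lc).mulVec v
      = (fun i => d i * v i) + fv • Lc.mulVec v := by
    intro v; funext i
    simp [Matrix.add_mulVec, Matrix.smul_mulVec, Matrix.mulVec_diagonal]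
  set Sdy : ℂ := ∑ i, d i * y i with hSdydef
  have hsz : ∑ i, z i = m * σ + Sdy := by
    rw [← hxz, hAx]
    simp only [Pi.add_apply]
    rw [Finset.sum_add_distrib]
    have h2 : ∑ i, (fv • Lc.mulVec x) i = 0 := by
      simp only [Pi.smul_apply, smul_eq_mul, ← Finset.mul_sum, hLsum, mul_zero]
    rw [h2, add_zero]
    have h3 : ∀ i, x i = m + y i := fun i => by simp [hy]
    calc ∑ i, d i * x i = ∑ i, (d i * m + d i * y i) := by
          refine Finset.sum_congr rfl fun i _ => ?_
          rw [h3 i]; ring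
      _ = m * σ + Sdy := by
          rw [Finset.sum_add_distrib, ← Finset.sum_mul, ← hSdydef, ← hσdef]; ring
  have hmval : m = α * (n:ℂ)⁻¹ * (∑ i, z i - Sdy) := by
    have h4 : ∑ i, z i - Sdy = m * σ := by rw [hsz]; ring
    rw [h4, hα, mul_inv, inv_inv]
    field_simp
  clear_value σ α m y Sdy
  -- quadratic form
  obtain ⟨t, ht⟩ : ∃ t : ℂ, star y ⬝ᵥ Lc.mulVec y = t := ⟨_, rfl⟩
  have htre : lamv * ∑ i, ‖y i‖ ^ 2 ≤ t.re := by rw [← ht]; exact hgap y hy0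
  have hsy : ∑ i, ‖y i‖ ^ 2 = en y ^ 2 := (en_sq y).symm
  have htre0 : 0 ≤ t.re :=
    le_trans (mul_nonneg hlam0.le (Finset.sum_nonneg fun i _ => sq_nonneg _)) htre
  have hLreal : ∀ i j, (starRingEnd ℂ) (Lc i j) = Lc i j := fun i j => by
    simp [hLc, Matrix.map_apply]
  have hsymc : ∀ i j, Lc i j = Lc j i := by
    intro i j
    have h2 : Lr i j = Lr j i := by conv_lhs => rw [← hsym, Matrix.transpose_apply]
    simp [hLc, Matrix.map_apply, h2]
  have htreal : (t.re : ℂ) = t := by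
    apply Complex.conj_eq_iff_re.mp
    rw [← ht]
    simp only [dotProduct, Matrix.mulVec, Pi.star_apply, RCLike.star_def, map_sum,
      Finset.mul_sum, _root_.map_mul, Complex.conj_conj]
    rw [Finset.sum_comm]
    refine Finset.sum_congr rfl fun i _ => Finset.sum_congr rfl fun j _ => ?_
    rw [hLreal, hsymc j i]
    ring
  have hft : fv * t = star y ⬝ᵥ z - star y ⬝ᵥ (fun i => d i * x i) := by
    rw [← hxz, hAx, dotProduct_add, hLx]
    rw [dotProduct_smul]
    rw [smul_eq_mul, ht]
    ring
  have h2a : ‖star y ⬝ᵥ z‖ ≤ en y * en z := en_dot _ _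
  have hDx : en (fun i => d i * x i) ≤ M₂ * en x := by
    apply en_le_of_sq_le (mul_nonneg hM₂0.le (en_nonneg x))
    rw [en_sq, mul_pow, en_sq, Finset.mul_sum]
    refine Finset.sum_le_sum fun i _ => ?_
    rw [norm_mul, mul_pow]
    exact mul_le_mul_of_nonneg_right (pow_le_pow_left₀ (norm_nonneg _) (hd i) 2) (sq_nonneg _)
  have h2b : ‖star y ⬝ᵥ (fun i => d i * x i)‖ ≤ en y * (M₂ * en x) :=
    le_trans (en_dot _ _) (mul_le_mul_of_nonneg_left hDx (en_nonneg y))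
  have hfnorm : c * (lamv * en y ^ 2) ≤ ‖fv * t‖ := by
    rw [norm_mul, ← htreal]
    rw [Complex.norm_real, Real.norm_eq_abs, _root_.abs_of_nonneg htre0]
    rw [hsy] at htre
    have h5 : 0 ≤ lamv * en y ^ 2 := mul_nonneg hlam0.le (sq_nonneg _)
    calc c * (lamv * en y ^ 2) ≤ ‖fv‖ * t.re :=
          mul_le_mul hcf htre h5 (norm_nonneg _)
      _ = ‖fv‖ * t.re := rfl
  have hyineq : c * lamv * en y ≤ en z + M₂ * en x := by
    have hub : ‖fv * t‖ ≤ en y * en z + en y * (M₂ * en x) := by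
      rw [hft]
      exact le_trans (norm_sub_le _ _) (add_le_add h2a h2b)
    have hchain : c * (lamv * en y ^ 2) ≤ en y * (en z + M₂ * en x) := by
      calc c * (lamv * en y ^ 2) ≤ ‖fv * t‖ := hfnorm
        _ ≤ en y * en z + en y * (M₂ * en x) := hub
        _ = en y * (en z + M₂ * en x) := by ring
    rcases eq_or_lt_of_le (en_nonneg y) with h0 | h0
    · rw [← h0]
      have := en_nonneg z
      have := en_nonneg x
      nlinarith
    · nlinarith
  -- E3 : bounds via Cauchy-Schwarz with ones
  have hsqn : Real.sqrt n * Real.sqrt n = (n : ℝ) :=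
    Real.mul_self_sqrt (Nat.cast_nonneg n)
  have hsumz : ‖∑ i, z i‖ ≤ Real.sqrt n * en z := by
    have h6 : ∑ i, z i = star (fun _ : Fin n => (1:ℂ)) ⬝ᵥ z := by
      simp [dotProduct]
    rw [h6]
    simpa [en_ones] using en_dot (fun _ : Fin n => (1:ℂ)) z
  have hend : en (fun i => (starRingEnd ℂ) (d i)) ≤ Real.sqrt n * M₂ := by
    apply en_le_of_sq_le (mul_nonneg (Real.sqrt_nonneg _) hM₂0.le)
    rw [en_sq, mul_pow, Real.sq_sqrt (Nat.cast_nonneg n)]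
    calc ∑ i, ‖(starRingEnd ℂ) (d i)‖ ^ 2 ≤ ∑ _i : Fin n, M₂ ^ 2 := by
          refine Finset.sum_le_sum fun i _ => ?_
          rw [RCLike.norm_conj]
          exact pow_le_pow_left₀ (norm_nonneg _) (hd i) 2
      _ = n * M₂ ^ 2 := by simp [Finset.sum_const, nsmul_eq_mul]
  have hSdyb : ‖Sdy‖ ≤ M₂ * (Real.sqrt n * en y) := by
    have h7 : Sdy = star (fun i => (starRingEnd ℂ) (d i)) ⬝ᵥ y := by
      simp [hSdydef, dotProduct]
    rw [h7]
    calc ‖star (fun i => (starRingEnd ℂ) (d i)) ⬝ᵥ y‖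
        ≤ en (fun i => (starRingEnd ℂ) (d i)) * en y := en_dot _ _
      _ ≤ (Real.sqrt n * M₂) * en y :=
          mul_le_mul_of_nonneg_right hend (en_nonneg y)
      _ = M₂ * (Real.sqrt n * en y) := by ring
  have hmn : ‖m‖ * Real.sqrt n ≤ M₁ * (en z + M₂ * en y) := by
    have h8 : ‖m‖ ≤ M₁ * (n:ℝ)⁻¹ * ‖∑ i, z i - Sdy‖ := by
      rw [hmval]
      rw [norm_mul, norm_mul]
      have h9 : ‖((n:ℂ))⁻¹‖ = (n:ℝ)⁻¹ := by
        rw [norm_inv]; norm_cast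
      rw [h9]
      refine mul_le_mul_of_nonneg_right ?_ (norm_nonneg _)
      exact mul_le_mul_of_nonneg_right hM₁ (by positivity)
    have h10 : ‖∑ i, z i - Sdy‖ ≤ Real.sqrt n * (en z + M₂ * en y) := by
      calc ‖∑ i, z i - Sdy‖ ≤ ‖∑ i, z i‖ + ‖Sdy‖ := norm_sub_le _ _
        _ ≤ Real.sqrt n * en z + M₂ * (Real.sqrt n * en y) := add_le_add hsumz hSdyb
        _ = Real.sqrt n * (en z + M₂ * en y) := by ring
    have hn1 : (1:ℝ) ≤ (n:ℝ) := by exact_mod_cast hn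
    have hnpos : (0:ℝ) < n := by linarith
    calc ‖m‖ * Real.sqrt n ≤ (M₁ * (n:ℝ)⁻¹ * (Real.sqrt n * (en z + M₂ * en y))) * Real.sqrt n := by
          refine mul_le_mul_of_nonneg_right ?_ (Real.sqrt_nonneg _)
          exact le_trans h8 (mul_le_mul_of_nonneg_left h10 (by positivity))
      _ = M₁ * (en z + M₂ * en y) * ((n:ℝ)⁻¹ * (Real.sqrt n * Real.sqrt n)) := by ring
      _ = M₁ * (en z + M₂ * en y) := by rw [hsqn]; field_simp
  have hex : en x ≤ M₁ * en z + (M₁ * M₂ + 1) * en y := by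
    have h11 : en x ≤ ‖m‖ * Real.sqrt n + en y := by
      rw [hxmy]
      refine le_trans (en_add _ _) ?_
      rw [en_smul, en_ones]
    have := hmn
    nlinarith [en_nonneg y]
  -- E4 : final bound on en y
  have hclam : 2 * M₂ * (M₁ * M₂ + 1) ≤ c * lamv := by
    rw [div_le_iff₀ hc] at hlam
    linarith
  have hclampos : 0 < c * lamv := mul_pos hc hlam0
  have hyfin : en y ≤ 2 * (1 + M₁ * M₂) / (c * lamv) * en z := by
    have h12 : c * lamv * en y ≤ (1 + M₁ * M₂) * en z + M₂ * (M₁ * M₂ + 1) * en y := by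
      calc c * lamv * en y ≤ en z + M₂ * en x := hyineq
        _ ≤ en z + M₂ * (M₁ * en z + (M₁ * M₂ + 1) * en y) :=
            add_le_add_right (mul_le_mul_of_nonneg_left hex hM₂0.le) _
        _ = (1 + M₁ * M₂) * en z + M₂ * (M₁ * M₂ + 1) * en y := by ring
    have h13 : M₂ * (M₁ * M₂ + 1) * en y ≤ (c * lamv / 2) * en y :=
      mul_le_mul_of_nonneg_right (by linarith) (en_nonneg y)
    rw [div_mul_eq_mul_div, le_div_iff₀ hclampos]
    linarith
  -- E5 : conclusion
  have hkeyvec : x - ((n:ℂ)⁻¹ * α * ∑ i, z i) • (fun _ : Fin n => (1:ℂ))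
      = y + (-((n:ℂ)⁻¹ * α * Sdy)) • (fun _ : Fin n => (1:ℂ)) := by
    funext i
    have hmz : m - (n:ℂ)⁻¹ * α * ∑ i, z i = -((n:ℂ)⁻¹ * α * Sdy) := by
      rw [hmval]; ring
    simp only [hy, Pi.sub_apply, Pi.add_apply, Pi.smul_apply, smul_eq_mul, mul_one]
    linear_combination hmz
  rw [hkeyvec]
  have hnpos : (0:ℝ) < n := Nat.cast_pos.mpr (by omega)
  have h9 : ‖((n:ℂ))⁻¹‖ = (n:ℝ)⁻¹ := by rw [norm_inv]; norm_cast
  have hcoef : ‖-((n:ℂ)⁻¹ * α * Sdy)‖ * Real.sqrt n ≤ M₁ * M₂ * en y := by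
    calc ‖-((n:ℂ)⁻¹ * α * Sdy)‖ * Real.sqrt n
        = (n:ℝ)⁻¹ * ‖α‖ * ‖Sdy‖ * Real.sqrt n := by
          rw [norm_neg, norm_mul, norm_mul, h9]
      _ ≤ (n:ℝ)⁻¹ * M₁ * (M₂ * (Real.sqrt n * en y)) * Real.sqrt n := by
          have h14 : (n:ℝ)⁻¹ * ‖α‖ ≤ (n:ℝ)⁻¹ * M₁ :=
            mul_le_mul_of_nonneg_left hM₁ (by positivity)
          refine mul_le_mul_of_nonneg_right ?_ (Real.sqrt_nonneg _)
          exact mul_le_mul h14 hSdyb (norm_nonneg _) (by positivity)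
      _ = M₁ * M₂ * en y * ((n:ℝ)⁻¹ * (Real.sqrt n * Real.sqrt n)) := by ring
      _ = M₁ * M₂ * en y := by rw [hsqn]; field_simp
  calc en (y + (-((n:ℂ)⁻¹ * α * Sdy)) • (fun _ : Fin n => (1:ℂ)))
      ≤ en y + ‖-((n:ℂ)⁻¹ * α * Sdy)‖ * Real.sqrt n := by
        refine le_trans (en_add _ _) ?_
        rw [en_smul, en_ones]
    _ ≤ en y + M₁ * M₂ * en y := by linarith
    _ = (1 + M₁ * M₂) * en y := by ring
    _ ≤ (1 + M₁ * M₂) * (2 * (1 + M₁ * M₂) / (c * lamv) * en z) :=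
        mul_le_mul_of_nonneg_left hyfin (by positivity)
    _ = 2 * (1 + M₁ * M₂) ^ 2 / (c * lamv) * en z := by ring


/-- Theorem 7 of the paper, coherence in growing networks. -/
theorem stmt_4 (g : ℕ → ℂ → ℂ) (f : ℂ → ℂ)
    (L : (n : ℕ) → Matrix (Fin n) (Fin n) ℝ) (lam : ℕ → ℝ)
    (hL : ∀ n, 2 ≤ n → (L n).PosSemidef)
    (hL1 : ∀ n, 2 ≤ n → (L n).mulVec (fun _ => 1) = 0)
    (hlam0 : ∀ n, 2 ≤ n → 0 ≤ lam n)
    (hgap : ∀ n, 2 ≤ n → ∀ x : Fin n → ℂ, (∑ i, x i = 0) →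
      lam n * ∑ i, ‖x i‖ ^ 2 ≤ (star x ⬝ᵥ ((L n).map (Complex.ofReal)).mulVec x).re)
    (hlam : Tendsto lam atTop atTop)
    (S : Set ℂ) (hS : IsCompact S)
    (M₂ : ℝ) (hM₂ : 0 < M₂) (hg : ∀ (i : ℕ), ∀ s ∈ S, ‖(g i s)⁻¹‖ ≤ M₂)
    (M₁ : ℝ) (hM₁ : 0 < M₁)
    (hgbar : ∀ n : ℕ, 1 ≤ n → ∀ s ∈ S,
      (∑ i ∈ Finset.range n, (g i s)⁻¹ ≠ 0) ∧
      ‖((n : ℂ)⁻¹ * ∑ i ∈ Finset.range n, (g i s)⁻¹)⁻¹‖ ≤ M₁)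
    (hf : ∃ c > 0, ∀ s ∈ S, c ≤ ‖f s‖)
    (ε : ℝ) (hε : 0 < ε) :
    ∃ N : ℕ, ∀ n, N ≤ n → ∀ s ∈ S,
      IsUnit (Matrix.diagonal (fun i : Fin n => (g i.1 s)⁻¹) + f s • (L n).map (Complex.ofReal)) ∧
      specNorm ((Matrix.diagonal (fun i : Fin n => (g i.1 s)⁻¹)
            + f s • (L n).map (Complex.ofReal))⁻¹
          - ((n : ℂ)⁻¹ * ((n : ℂ)⁻¹ * ∑ i ∈ Finset.range n, (g i s)⁻¹)⁻¹) • allOnes n) ≤ ε := by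
  obtain ⟨c, hc, hcf⟩ := hf
  set Λ : ℝ := max (2 * M₂ * (M₁ * M₂ + 1) / c) (2 * (1 + M₁ * M₂) ^ 2 / (c * ε)) with hΛ
  obtain ⟨N₀, hN₀⟩ := (hlam.eventually_ge_atTop Λ).exists_forall_of_atTop
  refine ⟨max N₀ 2, fun n hn s hs => ?_⟩
  have hn2 : 2 ≤ n := le_trans (le_max_right _ _) hn
  have hn1 : 1 ≤ n := by omega
  have hlamn : Λ ≤ lam n := hN₀ n (le_trans (le_max_left _ _) hn)
  set d : Fin n → ℂ := fun i => (g i.1 s)⁻¹ with hd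
  set Lc : Matrix (Fin n) (Fin n) ℂ := (L n).map Complex.ofReal with hLc
  set A : Matrix (Fin n) (Fin n) ℂ := Matrix.diagonal d + f s • Lc with hA
  have hconv : ∑ i : Fin n, d i = ∑ i ∈ Finset.range n, (g i s)⁻¹ :=
    Fin.sum_univ_eq_sum_range (fun i => (g i s)⁻¹) n
  obtain ⟨hσ', hM₁'⟩ := hgbar n hn1 s hs
  have hσ : ∑ i : Fin n, d i ≠ 0 := by rw [hconv]; exact hσ'
  have hM₁n : ‖((n:ℂ)⁻¹ * ∑ i : Fin n, d i)⁻¹‖ ≤ M₁ := by rw [hconv]; exact hM₁'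
  have hsymL : (L n)ᵀ = L n := (hL n hn2).1
  have hkey := key (L n) hsymL (hL1 n hn2) (lam n) (hgap n hn2) d (f s) M₁ M₂ c
    hM₂ (fun i => hg i.1 s hs) hσ hM₁n hc (hcf s hs) hn1
    (le_trans (le_max_left _ _) hlamn)
  -- invertibility
  have hinj : Function.Injective A.mulVec := by
    intro x₁ x₂ h12
    have h0 : A.mulVec (x₁ - x₂) = 0 := by rw [Matrix.mulVec_sub, h12, sub_self]
    have := hkey (x₁ - x₂) 0 h0
    simp only [Pi.zero_apply, Finset.sum_const_zero, mul_zero, zero_smul, sub_zero] at this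
    have hz0 : en (0 : Fin n → ℂ) = 0 := (en_zero_iff _).mpr rfl
    rw [hz0, mul_zero] at this
    have := le_antisymm this (en_nonneg _)
    exact sub_eq_zero.mp ((en_zero_iff _).mp this)
  have hunit : IsUnit A := Matrix.mulVec_injective_iff_isUnit.mp hinj
  refine ⟨hunit, ?_⟩
  -- norm bound
  have hAAinv : A * A⁻¹ = 1 := Matrix.mul_nonsing_inv A ((Matrix.isUnit_iff_isUnit_det A).mp hunit)
  have hεdiv : 2 * (1 + M₁ * M₂) ^ 2 / (c * lam n) ≤ ε := by
    have hC₂ : 2 * (1 + M₁ * M₂) ^ 2 / (c * ε) ≤ lam n := le_trans (le_max_right _ _) hlamn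
    have hK : (0:ℝ) < (1 + M₁ * M₂) ^ 2 := by positivity
    have hlampos : 0 < lam n := lt_of_lt_of_le (by positivity) hC₂
    rw [div_le_iff₀ (by positivity)]
    rw [div_le_iff₀ (by positivity)] at hC₂
    nlinarith
  rw [specNorm]
  refine ContinuousLinearMap.opNorm_le_bound _ hε.le fun v => ?_
  set w : Fin n → ℂ := WithLp.equiv 2 (Fin n → ℂ) v with hw
  have hv : v = (WithLp.equiv 2 (Fin n → ℂ)).symm w := (Equiv.symm_apply_apply _ v).symm
  rw [hv, WithLp.equiv_symm_apply, Matrix.toEuclideanCLM_toLp]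
  change en _ ≤ ε * en w
  set x : Fin n → ℂ := A⁻¹.mulVec w with hx
  have hAx : A.mulVec x = w := by
    rw [hx, Matrix.mulVec_mulVec, hAAinv, Matrix.one_mulVec]
  have hvec : (A⁻¹ - ((n : ℂ)⁻¹ * ((n : ℂ)⁻¹ * ∑ i ∈ Finset.range n, (g i s)⁻¹)⁻¹) • allOnes n).mulVec w
      = x - ((n:ℂ)⁻¹ * ((n:ℂ)⁻¹ * ∑ i ∈ Finset.range n, (g i s)⁻¹)⁻¹ * ∑ i, w i) • (fun _ : Fin n => (1:ℂ)) := by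
    rw [Matrix.sub_mulVec, Matrix.smul_mulVec]
    congr 1
    funext i
    simp only [Pi.smul_apply, smul_eq_mul, mul_one]
    have hall : ((allOnes n).mulVec w) i = ∑ j, w j := by
      simp [allOnes, Matrix.mulVec, dotProduct]
    rw [hall]
  rw [hvec, ← hconv]
  calc en (x - ((n:ℂ)⁻¹ * ((n:ℂ)⁻¹ * ∑ i : Fin n, d i)⁻¹ * ∑ i, w i) • (fun _ : Fin n => (1:ℂ)))
      ≤ 2 * (1 + M₁ * M₂) ^ 2 / (c * lam n) * en w := hkey x w hAx
    _ ≤ ε * en w := mul_le_mul_of_nonneg_right hεdiv (en_nonneg w)
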